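/- Let $g:C[0,T]\to\mathbb{R}$ be Fréchet differentiable at $R^{(n)}c$ with derivative the signed measure $\mu$, where $(R^{(n)}c)_t = e^{-n(T-t)}c_T + n\int_t^T e^{-n(s-t)}c_s\,ds$. Then $g^{(n)}(c) := g(R^{(n)}c)$ satisfies, as $\epsilon\to 0$, $g^{(n)}(c+\epsilon z) = g^{(n)}(c) + \epsilon\left(\int_0^T e^{-n(T-s)}\mu(ds)\right)z_T + \epsilon\int_0^T \left(\int_0^r e^{-n(r-s)}\mu(ds)\right) n\, z_r\,dr + o(\epsilon)$ for every $z\in C[0,T]$; hence $g^{(n)}\in\mathcal{A}_T$ with $\partial_{c_T}g^{(n)}(c) = \int_0^T e^{-n(T-s)}\mu(ds)$ and $\delta_r g^{(n)}(c) = n\int_0^r e^{-n(r-s)}\mu(ds)$. -/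

import Mathlib

set_option maxHeartbeats 1000000


open MeasureTheory Filter Set

/-- The sup norm `‖z‖ = sup_{s ∈ [0,T]} |z s|` of a path, as used on `C[0,T]`. -/
noncomputable def supNorm (T : ℝ) (z : ℝ → ℝ) : ℝ :=
  ⨆ s : Set.Icc (0:ℝ) T, |z s|

/-- A functional `h` on paths belongs to the class `𝒜_t` at `c`, with vertical part `dh`
(an atom at `t`) and absolutely continuous part `δh`, if its (Fréchet) derivative at `c`
has the form
`h(c+z) = h(c) + dh ⬝ z_t + ∫_0^t δh(s) z_s ds + o(‖z‖)` as `‖z‖ → 0`. -/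
def MemClassA (T t : ℝ) (h : (ℝ → ℝ) → ℝ) (c : ℝ → ℝ) (dh : ℝ) (δh : ℝ → ℝ) : Prop :=
  IntegrableOn δh (Set.Icc 0 t) volume ∧
  ∀ ε > (0:ℝ), ∃ δ > (0:ℝ), ∀ z : ℝ → ℝ, Continuous z →
    (∀ s ∈ Set.Icc (0:ℝ) T, |z s| ≤ δ) →
    |h (fun s => c s + z s) - h c - (dh * z t + ∫ s in (0:ℝ)..t, δh s * z s)|
      ≤ ε * supNorm T z

/-- The smoothing operator
`(R⁽ⁿ⁾c)_t = e^{-n(T-t)} c_T + n ∫_t^T e^{-n(s-t)} c_s ds`. -/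
noncomputable def Rn (T : ℝ) (n : ℕ) (c : ℝ → ℝ) (t : ℝ) : ℝ :=
  Real.exp (-(n : ℝ) * (T - t)) * c T
    + (n : ℝ) * ∫ s in t..T, Real.exp (-(n : ℝ) * (s - t)) * c s

/-- `g` is Fréchet differentiable at `c` (as a functional on `C[0,T]`) with derivative
the signed measure `μ = μp - μn` (Jordan decomposition into two finite measures):
`g(c+z) = g(c) + ∫_{[0,T]} z dμ + o(‖z‖)` as `‖z‖ → 0`. -/
def FrechetDerivAt (T : ℝ) (g : (ℝ → ℝ) → ℝ) (c : ℝ → ℝ)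
    (μp μn : Measure ℝ) : Prop :=
  IsFiniteMeasure μp ∧ IsFiniteMeasure μn ∧
  ∀ ε > (0:ℝ), ∃ δ > (0:ℝ), ∀ z : ℝ → ℝ, Continuous z →
    (∀ s ∈ Set.Icc (0:ℝ) T, |z s| ≤ δ) →
    |g (fun s => c s + z s) - g c
        - ((∫ s in Set.Icc (0:ℝ) T, z s ∂μp) - ∫ s in Set.Icc (0:ℝ) T, z s ∂μn)|
      ≤ ε * supNorm T z

lemma supNorm_nonneg (T : ℝ) (z : ℝ → ℝ) : 0 ≤ supNorm T z :=
  Real.iSup_nonneg fun _ => abs_nonneg _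

lemma le_supNorm {T : ℝ} {z : ℝ → ℝ} (hz : Continuous z) {s : ℝ}
    (hs : s ∈ Set.Icc (0:ℝ) T) : |z s| ≤ supNorm T z := by
  haveI : CompactSpace (Set.Icc (0:ℝ) T) := isCompact_iff_compactSpace.mp isCompact_Icc
  have hbdd : BddAbove (Set.range fun s : Set.Icc (0:ℝ) T => |z s|) :=
    (isCompact_range (continuous_abs.comp (hz.comp continuous_subtype_val))).bddAbove
  exact le_ciSup hbdd (⟨s, hs⟩ : Set.Icc (0:ℝ) T)

lemma supNorm_le {T : ℝ} (hT : 0 ≤ T) {z : ℝ → ℝ} {M : ℝ}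
    (h : ∀ s ∈ Set.Icc (0:ℝ) T, |z s| ≤ M) : supNorm T z ≤ M := by
  haveI : Nonempty (Set.Icc (0:ℝ) T) := (Set.nonempty_Icc.mpr hT).to_subtype
  exact ciSup_le fun s => h s s.2

/-- Real-parameter version of the smoothing operator. -/
noncomputable def Rr (T ν : ℝ) (z : ℝ → ℝ) (u : ℝ) : ℝ :=
  Real.exp (-ν * (T - u)) * z T + ν * ∫ s in u..T, Real.exp (-ν * (s - u)) * z s

lemma Rr_inner_eq (T ν : ℝ) {z : ℝ → ℝ} (hz : Continuous z) (u : ℝ) :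
    (∫ s in u..T, Real.exp (-ν * (s - u)) * z s)
      = Real.exp (ν * u) * ((∫ s in (0:ℝ)..T, Real.exp (-ν * s) * z s)
          - ∫ s in (0:ℝ)..u, Real.exp (-ν * s) * z s) := by
  have hinteg : ∀ a b : ℝ, IntervalIntegrable (fun s => Real.exp (-ν * s) * z s) volume a b :=
    fun a b => ((Real.continuous_exp.comp (continuous_const.mul continuous_id)).mul hz).intervalIntegrable a b
  rw [show (∫ s in u..T, Real.exp (-ν * (s - u)) * z s)
      = ∫ s in u..T, Real.exp (ν * u) * (Real.exp (-ν * s) * z s) from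
    intervalIntegral.integral_congr fun s _ => by rw [← mul_assoc, ← Real.exp_add]; ring_nf]
  rw [intervalIntegral.integral_const_mul,
    ← intervalIntegral.integral_interval_sub_left (hinteg 0 T) (hinteg 0 u)]

lemma Rr_cont (T ν : ℝ) {z : ℝ → ℝ} (hz : Continuous z) : Continuous (Rr T ν z) := by
  have hinteg : ∀ a b : ℝ, IntervalIntegrable (fun s => Real.exp (-ν * s) * z s) volume a b :=
    fun a b => ((Real.continuous_exp.comp (continuous_const.mul continuous_id)).mul hz).intervalIntegrable a b
  have h1 : Continuous fun u : ℝ => ∫ s in (0:ℝ)..u, Real.exp (-ν * s) * z s :=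
    intervalIntegral.continuous_primitive hinteg 0
  have : (Rr T ν z) = fun u => Real.exp (-ν * (T - u)) * z T
      + ν * (Real.exp (ν * u) * ((∫ s in (0:ℝ)..T, Real.exp (-ν * s) * z s)
          - ∫ s in (0:ℝ)..u, Real.exp (-ν * s) * z s)) := by
    funext u; unfold Rr; rw [Rr_inner_eq T ν hz u]
  rw [this]
  fun_prop

lemma Rr_bound {T ν : ℝ} (hν : 0 ≤ ν) {z : ℝ → ℝ} {M : ℝ} (hM : 0 ≤ M)
    (hb : ∀ s ∈ Set.Icc (0:ℝ) T, |z s| ≤ M) {u : ℝ} (hu : u ∈ Set.Icc (0:ℝ) T) :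
    |Rr T ν z u| ≤ (1 + ν * T) * M := by
  have hu0 := hu.1; have huT := hu.2
  have h1 : |Real.exp (-ν * (T - u)) * z T| ≤ M := by
    rw [abs_mul, abs_of_nonneg (Real.exp_pos _).le]
    calc Real.exp (-ν * (T - u)) * |z T| ≤ 1 * M := by
          apply mul_le_mul _ (hb T ⟨le_trans hu0 huT, le_refl T⟩) (abs_nonneg _) zero_le_one
          exact Real.exp_le_one_iff.mpr (by nlinarith)
      _ = M := one_mul M
  have h2 : |∫ s in u..T, Real.exp (-ν * (s - u)) * z s| ≤ M * |T - u| := by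
    rw [← Real.norm_eq_abs]
    apply intervalIntegral.norm_integral_le_of_norm_le_const
    intro x hx
    rw [Set.uIoc_of_le huT] at hx
    have : Real.exp (-ν * (x - u)) ≤ 1 := Real.exp_le_one_iff.mpr (by nlinarith [hx.1.le, hx.2])
    calc ‖Real.exp (-ν * (x - u)) * z x‖ = Real.exp (-ν * (x - u)) * |z x| := by
          rw [norm_mul, Real.norm_eq_abs, Real.norm_eq_abs, abs_of_nonneg (Real.exp_pos _).le]
      _ ≤ 1 * M := mul_le_mul this (hb x ⟨le_trans hu0 hx.1.le, hx.2⟩) (abs_nonneg _) zero_le_one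
      _ = M := one_mul M
  have habs : |T - u| ≤ T := by rw [abs_of_nonneg (by linarith)]; linarith
  calc |Rr T ν z u| ≤ |Real.exp (-ν * (T - u)) * z T|
        + |ν * ∫ s in u..T, Real.exp (-ν * (s - u)) * z s| := abs_add_le _ _
    _ ≤ M + ν * (M * |T - u|) := by
        rw [abs_mul ν, abs_of_nonneg hν]
        exact add_le_add h1 (mul_le_mul_of_nonneg_left h2 hν)
    _ ≤ M + ν * (M * T) := by
        have : M * |T - u| ≤ M * T := mul_le_mul_of_nonneg_left habs hM
        nlinarith
    _ = (1 + ν * T) * M := by ring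

lemma Rr_add (T ν : ℝ) {a b : ℝ → ℝ} (ha : Continuous a) (hb : Continuous b) (u : ℝ) :
    Rr T ν (fun s => a s + b s) u = Rr T ν a u + Rr T ν b u := by
  unfold Rr
  have hia : IntervalIntegrable (fun s => Real.exp (-ν * (s - u)) * a s) volume u T :=
    ((Real.continuous_exp.comp (by fun_prop)).mul ha).intervalIntegrable u T
  have hib : IntervalIntegrable (fun s => Real.exp (-ν * (s - u)) * b s) volume u T :=
    ((Real.continuous_exp.comp (by fun_prop)).mul hb).intervalIntegrable u T
  rw [show (fun s => Real.exp (-ν * (s - u)) * (a s + b s))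
      = fun s => Real.exp (-ν * (s - u)) * a s + Real.exp (-ν * (s - u)) * b s from
    funext fun s => by ring, intervalIntegral.integral_add hia hib]
  ring

section Fubini
variable {T ν : ℝ} (μ : Measure ℝ) [IsFiniteMeasure μ]

/-- The kernel on the product space. -/
noncomputable def Fker (ν : ℝ) (z : ℝ → ℝ) : ℝ × ℝ → ℝ :=
  fun p => Set.indicator {q : ℝ × ℝ | q.1 ≤ q.2}
    (fun q => Real.exp (-ν * (q.2 - q.1)) * z q.2) p

lemma Fker_apply (ν : ℝ) (z : ℝ → ℝ) (u s : ℝ) :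
    Fker ν z (u, s) = if u ≤ s then Real.exp (-ν * (s - u)) * z s else 0 := by
  simp [Fker, Set.indicator_apply, Set.mem_setOf_eq]

lemma keyFubini (hT : 0 < T) (hν : 0 ≤ ν) {z : ℝ → ℝ} (hz : Continuous z) :
    ∫ u in Set.Icc (0:ℝ) T, Rr T ν z u ∂μ
      = (∫ u in Set.Icc (0:ℝ) T, Real.exp (-ν * (T - u)) ∂μ) * z T
        + ∫ r in (0:ℝ)..T, (ν * ∫ u in Set.Icc (0:ℝ) r, Real.exp (-ν * (r - u)) ∂μ) * z r := by
  classical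
  set e2 : ℝ → ℝ := fun u => ∫ s in u..T, Real.exp (-ν * (s - u)) * z s with he2
  have he2cont : Continuous e2 := by
    have : e2 = fun u => Real.exp (ν * u) * ((∫ s in (0:ℝ)..T, Real.exp (-ν * s) * z s)
        - ∫ s in (0:ℝ)..u, Real.exp (-ν * s) * z s) := funext fun u => Rr_inner_eq T ν hz u
    rw [this]
    have hinteg : ∀ a b : ℝ, IntervalIntegrable (fun s => Real.exp (-ν * s) * z s) volume a b :=
      fun a b => ((Real.continuous_exp.comp (by fun_prop)).mul hz).intervalIntegrable a b
    have := intervalIntegral.continuous_primitive hinteg 0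
    fun_prop
  -- split the μ-integral
  have hint1 : IntegrableOn (fun u => Real.exp (-ν * (T - u)) * z T) (Set.Icc (0:ℝ) T) μ :=
    ContinuousOn.integrableOn_compact isCompact_Icc (by fun_prop)
  have hint2 : IntegrableOn (fun u => ν * e2 u) (Set.Icc (0:ℝ) T) μ :=
    ContinuousOn.integrableOn_compact isCompact_Icc (by fun_prop)
  have hsplit : ∫ u in Set.Icc (0:ℝ) T, Rr T ν z u ∂μ
      = (∫ u in Set.Icc (0:ℝ) T, Real.exp (-ν * (T - u)) ∂μ) * z T
        + ν * ∫ u in Set.Icc (0:ℝ) T, e2 u ∂μ := by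
    unfold Rr
    rw [integral_add hint1 hint2, integral_mul_const, integral_const_mul]
  rw [hsplit]
  congr 1
  -- Fubini for the second term
  set M : ℝ := supNorm T z with hM
  have hM0 : 0 ≤ M := supNorm_nonneg T z
  have hzb : ∀ s ∈ Set.Icc (0:ℝ) T, |z s| ≤ M := fun s hs => le_supNorm hz hs
  have hSmeas : MeasurableSet {q : ℝ × ℝ | q.1 ≤ q.2} := measurableSet_le measurable_fst measurable_snd
  have hFm : StronglyMeasurable (Fker ν z) :=
    (((Real.continuous_exp.comp (by fun_prop)).mul (hz.comp continuous_snd)).stronglyMeasurable).indicator hSmeas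
  haveI : IsFiniteMeasure (volume.restrict (Set.Icc (0:ℝ) T)) := by
    constructor
    rw [Measure.restrict_apply_univ, Real.volume_Icc]
    exact ENNReal.ofReal_lt_top
  have hFint : Integrable (Fker ν z) ((μ.restrict (Set.Icc (0:ℝ) T)).prod (volume.restrict (Set.Icc (0:ℝ) T))) := by
    apply Integrable.mono' (integrable_const M) hFm.aestronglyMeasurable
    rw [Measure.prod_restrict, ae_restrict_iff' (measurableSet_Icc.prod measurableSet_Icc)]
    apply ae_of_all
    rintro ⟨u, s⟩ hp
    simp only [Set.mem_prod] at hp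
    rw [Fker_apply]
    by_cases h : u ≤ s
    · rw [if_pos h]
      have h1 : Real.exp (-ν * (s - u)) ≤ 1 := Real.exp_le_one_iff.mpr (by nlinarith)
      calc ‖Real.exp (-ν * (s - u)) * z s‖ = Real.exp (-ν * (s - u)) * |z s| := by
            rw [norm_mul, Real.norm_eq_abs, Real.norm_eq_abs, abs_of_nonneg (Real.exp_pos _).le]
        _ ≤ 1 * M := mul_le_mul h1 (hzb s hp.2) (abs_nonneg _) zero_le_one
        _ = M := one_mul M
    · rw [if_neg h]; simpa using hM0
  have hswap : ∫ u in Set.Icc (0:ℝ) T, (∫ s in Set.Icc (0:ℝ) T, Fker ν z (u, s)) ∂μ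
      = ∫ s in Set.Icc (0:ℝ) T, (∫ u in Set.Icc (0:ℝ) T, Fker ν z (u, s) ∂μ) := by
    have huncurry : Function.uncurry (fun u s => Fker ν z (u, s)) = Fker ν z := by
      funext p; cases p; rfl
    exact integral_integral_swap (f := fun u s => Fker ν z (u, s)) (huncurry ▸ hFint)
  have stepA : ∀ u ∈ Set.Icc (0:ℝ) T, e2 u = ∫ s in Set.Icc (0:ℝ) T, Fker ν z (u, s) := by
    intro u hu
    have h1 : (fun s => Fker ν z (u, s)) = Set.indicator (Set.Ici u) (fun s => Real.exp (-ν * (s - u)) * z s) := by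
      funext s
      rw [Fker_apply, Set.indicator_apply]
      simp [Set.mem_Ici]
    rw [h1, setIntegral_indicator measurableSet_Ici]
    have h2 : Set.Icc (0:ℝ) T ∩ Set.Ici u = Set.Icc u T := by
      ext x
      simp only [Set.mem_inter_iff, Set.mem_Icc, Set.mem_Ici]
      constructor
      · rintro ⟨⟨_, hxT⟩, hux⟩; exact ⟨hux, hxT⟩
      · rintro ⟨hux, hxT⟩; exact ⟨⟨le_trans hu.1 hux, hxT⟩, hux⟩
    rw [h2, integral_Icc_eq_integral_Ioc]
    exact intervalIntegral.integral_of_le hu.2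
  have stepC : ∀ s ∈ Set.Icc (0:ℝ) T, (∫ u in Set.Icc (0:ℝ) T, Fker ν z (u, s) ∂μ)
      = (∫ u in Set.Icc (0:ℝ) s, Real.exp (-ν * (s - u)) ∂μ) * z s := by
    intro s hs
    have h1 : (fun u => Fker ν z (u, s)) = Set.indicator (Set.Iic s) (fun u => Real.exp (-ν * (s - u)) * z s) := by
      funext u
      rw [Fker_apply, Set.indicator_apply]
      simp [Set.mem_Iic]
    rw [h1, setIntegral_indicator measurableSet_Iic]
    have h2 : Set.Icc (0:ℝ) T ∩ Set.Iic s = Set.Icc (0:ℝ) s := by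
      ext x
      simp only [Set.mem_inter_iff, Set.mem_Icc, Set.mem_Iic]
      constructor
      · rintro ⟨⟨hx0, _⟩, hxs⟩; exact ⟨hx0, hxs⟩
      · rintro ⟨hx0, hxs⟩; exact ⟨⟨hx0, le_trans hxs hs.2⟩, hxs⟩
    rw [h2, integral_mul_const]
  calc ν * ∫ u in Set.Icc (0:ℝ) T, e2 u ∂μ
      = ν * ∫ u in Set.Icc (0:ℝ) T, (∫ s in Set.Icc (0:ℝ) T, Fker ν z (u, s)) ∂μ := by
        rw [setIntegral_congr_fun measurableSet_Icc stepA]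
    _ = ν * ∫ s in Set.Icc (0:ℝ) T, (∫ u in Set.Icc (0:ℝ) T, Fker ν z (u, s) ∂μ) := by rw [hswap]
    _ = ν * ∫ s in Set.Icc (0:ℝ) T, (∫ u in Set.Icc (0:ℝ) s, Real.exp (-ν * (s - u)) ∂μ) * z s := by
        rw [setIntegral_congr_fun measurableSet_Icc stepC]
    _ = ∫ r in (0:ℝ)..T, (ν * ∫ u in Set.Icc (0:ℝ) r, Real.exp (-ν * (r - u)) ∂μ) * z r := by
        rw [integral_Icc_eq_integral_Ioc, ← intervalIntegral.integral_of_le hT.le,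
          ← intervalIntegral.integral_const_mul]
        exact intervalIntegral.integral_congr fun r _ => by ring

end Fubini

section Density
variable {ν : ℝ} (μ : Measure ℝ) [IsFiniteMeasure μ]

lemma Imeas (hν : 0 ≤ ν) :
    Measurable (fun r => ∫ u in Set.Icc (0:ℝ) r, Real.exp (-ν * (r - u)) ∂μ) := by
  have hrw : (fun r => ∫ u in Set.Icc (0:ℝ) r, Real.exp (-ν * (r - u)) ∂μ)
      = fun r => Real.exp (-ν * r) * ∫ u in Set.Icc (0:ℝ) r, Real.exp (ν * u) ∂μ := by
    funext r
    rw [← integral_const_mul]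
    apply setIntegral_congr_fun measurableSet_Icc
    intro u _
    show Real.exp (-ν * (r - u)) = Real.exp (-ν * r) * Real.exp (ν * u)
    rw [← Real.exp_add]
    ring_nf
  rw [hrw]
  have hmono : Monotone (fun r => ∫ u in Set.Icc (0:ℝ) r, Real.exp (ν * u) ∂μ) := by
    intro r1 r2 h12
    apply setIntegral_mono_set
    · exact ContinuousOn.integrableOn_compact isCompact_Icc (by fun_prop)
    · exact ae_of_all _ fun u => (Real.exp_pos _).le
    · exact HasSubset.Subset.eventuallyLE (Set.Icc_subset_Icc le_rfl h12)
  exact ((Real.continuous_exp.comp (by fun_prop)).measurable).mul hmono.measurable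

lemma Ibound (hν : 0 ≤ ν) (r : ℝ) :
    |∫ u in Set.Icc (0:ℝ) r, Real.exp (-ν * (r - u)) ∂μ| ≤ (μ Set.univ).toReal := by
  have h0 : 0 ≤ ∫ u in Set.Icc (0:ℝ) r, Real.exp (-ν * (r - u)) ∂μ :=
    setIntegral_nonneg measurableSet_Icc fun u _ => (Real.exp_pos _).le
  rw [abs_of_nonneg h0]
  calc ∫ u in Set.Icc (0:ℝ) r, Real.exp (-ν * (r - u)) ∂μ
      ≤ ∫ _u in Set.Icc (0:ℝ) r, (1:ℝ) ∂μ := by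
        apply setIntegral_mono_on
        · exact ContinuousOn.integrableOn_compact isCompact_Icc (by fun_prop)
        · exact (integrableOn_const_iff (C := (1:ℝ))).mpr (Or.inr (measure_lt_top _ _))
        · exact measurableSet_Icc
        · intro u hu
          exact Real.exp_le_one_iff.mpr (by nlinarith [hu.2])
    _ = (μ (Set.Icc (0:ℝ) r)).toReal := by simp [measureReal_def]
    _ ≤ (μ Set.univ).toReal :=
        ENNReal.toReal_mono (measure_ne_top μ _) (measure_mono (Set.subset_univ _))

end Density

section Density2
variable {ν : ℝ} (μ : Measure ℝ) [IsFiniteMeasure μ]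

lemma intervalIntegrable_density {T : ℝ} (hT : 0 ≤ T) (hν : 0 ≤ ν) {z : ℝ → ℝ}
    (hz : Continuous z) :
    IntervalIntegrable
      (fun r => (ν * ∫ u in Set.Icc (0:ℝ) r, Real.exp (-ν * (r - u)) ∂μ) * z r)
      volume 0 T := by
  rw [intervalIntegrable_iff, Set.uIoc_of_le hT]
  haveI : IsFiniteMeasure (volume.restrict (Set.Ioc (0:ℝ) T)) := by
    constructor
    rw [Measure.restrict_apply_univ, Real.volume_Ioc]
    exact ENNReal.ofReal_lt_top
  apply Integrable.mono' (integrable_const ((ν * (μ Set.univ).toReal) * supNorm T z))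
  · exact ((measurable_const.mul (Imeas μ hν)).mul hz.measurable).aestronglyMeasurable
  · rw [ae_restrict_iff' measurableSet_Ioc]
    apply ae_of_all
    intro r hr
    have h1 : |z r| ≤ supNorm T z := le_supNorm hz ⟨hr.1.le, hr.2⟩
    have h2 := Ibound μ hν r
    rw [Real.norm_eq_abs, abs_mul, abs_mul, abs_of_nonneg hν]
    apply mul_le_mul _ h1 (abs_nonneg _) (by positivity)
    exact mul_le_mul_of_nonneg_left h2 hν

end Density2

lemma integrableOn_B {ν T : ℝ} (hν : 0 ≤ ν) (μp μn : Measure ℝ)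
    [IsFiniteMeasure μp] [IsFiniteMeasure μn] :
    IntegrableOn (fun r => ν * ((∫ u in Set.Icc (0:ℝ) r, Real.exp (-ν * (r - u)) ∂μp)
      - ∫ u in Set.Icc (0:ℝ) r, Real.exp (-ν * (r - u)) ∂μn)) (Set.Icc (0:ℝ) T) volume := by
  haveI : IsFiniteMeasure (volume.restrict (Set.Icc (0:ℝ) T)) := by
    constructor
    rw [Measure.restrict_apply_univ, Real.volume_Icc]
    exact ENNReal.ofReal_lt_top
  apply Integrable.mono'
    (integrable_const (ν * ((μp Set.univ).toReal + (μn Set.univ).toReal)))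
  · exact (measurable_const.mul ((Imeas μp hν).sub (Imeas μn hν))).aestronglyMeasurable
  · apply ae_of_all
    intro r
    rw [Real.norm_eq_abs, abs_mul, abs_of_nonneg hν]
    apply mul_le_mul_of_nonneg_left _ hν
    calc |(∫ u in Set.Icc (0:ℝ) r, Real.exp (-ν * (r - u)) ∂μp)
          - ∫ u in Set.Icc (0:ℝ) r, Real.exp (-ν * (r - u)) ∂μn|
        ≤ |∫ u in Set.Icc (0:ℝ) r, Real.exp (-ν * (r - u)) ∂μp|
          + |∫ u in Set.Icc (0:ℝ) r, Real.exp (-ν * (r - u)) ∂μn| := abs_sub _ _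
      _ ≤ (μp Set.univ).toReal + (μn Set.univ).toReal :=
          add_le_add (Ibound μp hν r) (Ibound μn hν r)


/-- If `g` is Fréchet differentiable at `R⁽ⁿ⁾c` with derivative the
signed measure `μ = μp - μn`, then `g⁽ⁿ⁾(c) := g(R⁽ⁿ⁾c)` satisfies, as `ε → 0`, the
expansion
`g⁽ⁿ⁾(c+εz) = g⁽ⁿ⁾(c) + ε (∫ e^{-n(T-s)} μ(ds)) z_T
  + ε ∫_0^T (n ∫_{[0,r]} e^{-n(r-s)} μ(ds)) z_r dr + o(ε)`
for every continuous `z`; hence `g⁽ⁿ⁾ ∈ 𝒜_T` with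
`∂_{c_T} g⁽ⁿ⁾(c) = ∫ e^{-n(T-s)} μ(ds)` and `δ_r g⁽ⁿ⁾(c) = n ∫_0^r e^{-n(r-s)} μ(ds)`. -/
theorem Rn_pullback_classA_expansion
    (T : ℝ) (hT : 0 < T) (g : (ℝ → ℝ) → ℝ) (n : ℕ) (c : ℝ → ℝ) (hc : Continuous c)
    (μp μn : Measure ℝ)
    (hfr : FrechetDerivAt T g (fun u => Rn T n c u) μp μn) :
    letI A : ℝ := (∫ s in Set.Icc (0:ℝ) T, Real.exp (-(n : ℝ) * (T - s)) ∂μp) - (∫ s in Set.Icc (0:ℝ) T, Real.exp (-(n : ℝ) * (T - s)) ∂μn)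
    letI B : ℝ → ℝ := fun r => (n : ℝ) * ((∫ s in Set.Icc (0:ℝ) r, Real.exp (-(n : ℝ) * (r - s)) ∂μp) - (∫ s in Set.Icc (0:ℝ) r, Real.exp (-(n : ℝ) * (r - s)) ∂μn))
    (∀ z : ℝ → ℝ, Continuous z →
      Filter.Tendsto
        (fun ε : ℝ =>
          ((g fun u => Rn T n (fun s => c s + ε * z s) u) - (g fun u => Rn T n c u)
            - ε * (A * z T + ∫ r in (0:ℝ)..T, B r * z r)) / ε)
        (nhdsWithin 0 {(0:ℝ)}ᶜ) (nhds 0))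
    ∧ MemClassA T T (fun x => g fun u => Rn T n x u) c A B := by
  set ν : ℝ := (n : ℝ) with hνdef
  have hν : 0 ≤ ν := Nat.cast_nonneg n
  haveI hμp : IsFiniteMeasure μp := hfr.1
  haveI hμn : IsFiniteMeasure μn := hfr.2.1
  set A : ℝ := (∫ s in Set.Icc (0:ℝ) T, Real.exp (-ν * (T - s)) ∂μp)
      - ∫ s in Set.Icc (0:ℝ) T, Real.exp (-ν * (T - s)) ∂μn with hAdef
  set B : ℝ → ℝ := fun r => ν * ((∫ s in Set.Icc (0:ℝ) r, Real.exp (-ν * (r - s)) ∂μp)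
      - ∫ s in Set.Icc (0:ℝ) r, Real.exp (-ν * (r - s)) ∂μn) with hBdef
  have hA : A = (∫ s in Set.Icc (0:ℝ) T, Real.exp (-ν * (T - s)) ∂μp)
      - ∫ s in Set.Icc (0:ℝ) T, Real.exp (-ν * (T - s)) ∂μn := rfl
  have hB : ∀ r, B r = ν * ((∫ s in Set.Icc (0:ℝ) r, Real.exp (-ν * (r - s)) ∂μp)
      - ∫ s in Set.Icc (0:ℝ) r, Real.exp (-ν * (r - s)) ∂μn) := fun r => rfl
  have hC : (0:ℝ) < 1 + ν * T := by nlinarith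
  have key2 : ∀ z : ℝ → ℝ, Continuous z →
      (∫ u in Set.Icc (0:ℝ) T, Rr T ν z u ∂μp) - (∫ u in Set.Icc (0:ℝ) T, Rr T ν z u ∂μn)
        = A * z T + ∫ r in (0:ℝ)..T, B r * z r := by
    intro z hz
    have hp := keyFubini μp hT hν hz
    have hn := keyFubini μn hT hν hz
    have hsub : ∫ r in (0:ℝ)..T, B r * z r
        = (∫ r in (0:ℝ)..T, (ν * ∫ u in Set.Icc (0:ℝ) r, Real.exp (-ν * (r - u)) ∂μp) * z r)
          - ∫ r in (0:ℝ)..T, (ν * ∫ u in Set.Icc (0:ℝ) r, Real.exp (-ν * (r - u)) ∂μn) * z r := by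
      rw [← intervalIntegral.integral_sub (intervalIntegrable_density μp hT.le hν hz)
        (intervalIntegrable_density μn hT.le hν hz)]
      apply intervalIntegral.integral_congr
      intro r _
      simp only [hBdef]
      ring
    rw [hp, hn, hsub, hA]
    ring
  have E : ∀ ε' > (0:ℝ), ∃ δ > (0:ℝ), ∀ z : ℝ → ℝ, Continuous z →
      (∀ s ∈ Set.Icc (0:ℝ) T, |z s| ≤ δ) →
      |g (fun u => Rn T n (fun s => c s + z s) u) - g (fun u => Rn T n c u)
        - (A * z T + ∫ r in (0:ℝ)..T, B r * z r)|
        ≤ ε' * ((1 + ν * T) * supNorm T z) := by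
    intro ε' hε'
    obtain ⟨δ', hδ'pos, hδ'⟩ := hfr.2.2 ε' hε'
    refine ⟨δ' / (1 + ν * T), div_pos hδ'pos hC, ?_⟩
    intro z hz hzb
    have hM0 : 0 ≤ supNorm T z := supNorm_nonneg T z
    have hzM : ∀ s ∈ Set.Icc (0:ℝ) T, |z s| ≤ supNorm T z := fun s hs => le_supNorm hz hs
    have hMδ : supNorm T z ≤ δ' / (1 + ν * T) := supNorm_le hT.le hzb
    have hwc : Continuous (Rr T ν z) := Rr_cont T ν hz
    have hwb : ∀ u ∈ Set.Icc (0:ℝ) T, |Rr T ν z u| ≤ δ' := by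
      intro u hu
      calc |Rr T ν z u| ≤ (1 + ν * T) * supNorm T z := Rr_bound hν hM0 hzM hu
        _ ≤ (1 + ν * T) * (δ' / (1 + ν * T)) := mul_le_mul_of_nonneg_left hMδ hC.le
        _ = δ' := mul_div_cancel₀ _ (ne_of_gt hC)
    have happ := hδ' (Rr T ν z) hwc hwb
    have harg : (fun s => (fun u => Rn T n c u) s + Rr T ν z s)
        = fun u => Rn T n (fun s => c s + z s) u := by
      funext u
      exact (Rr_add T ν hc hz u).symm
    rw [harg, key2 z hz] at happ
    refine le_trans happ ?_
    exact mul_le_mul_of_nonneg_left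
      (supNorm_le hT.le fun u hu => Rr_bound hν hM0 hzM hu) hε'.le
  constructor
  · intro z hz
    rw [Metric.tendsto_nhdsWithin_nhds]
    intro ε' hε'
    set M := supNorm T z with hMdef
    have hM0 : 0 ≤ M := supNorm_nonneg T z
    set ε'' : ℝ := ε' / ((1 + ν * T) * (M + 1) * 2) with hε''def
    have hε'' : (0:ℝ) < ε'' := by rw [hε''def]; positivity
    obtain ⟨δ, hδpos, hE⟩ := E ε'' hε''
    refine ⟨δ / (M + 1), by positivity, ?_⟩
    intro ε hεne hεd
    rw [Real.dist_eq, sub_zero] at hεd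
    rw [Real.dist_eq, sub_zero]
    have hεne' : ε ≠ 0 := hεne
    have hεpos : 0 < |ε| := abs_pos.mpr hεne'
    have hzε : Continuous fun s => ε * z s := continuous_const.mul hz
    have hzεb : ∀ s ∈ Set.Icc (0:ℝ) T, |ε * z s| ≤ δ := by
      intro s hs
      rw [abs_mul]
      have h1 : |ε| * |z s| ≤ (δ / (M + 1)) * M :=
        mul_le_mul hεd.le (le_supNorm hz hs) (abs_nonneg _) (by positivity)
      have h2 : (δ / (M + 1)) * M ≤ δ := by
        rw [div_mul_eq_mul_div, div_le_iff₀ (by positivity : (0:ℝ) < M + 1)]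
        nlinarith
      linarith
    have h3 := hE (fun s => ε * z s) hzε hzεb
    have hlin : A * (ε * z T) + (∫ r in (0:ℝ)..T, B r * (ε * z r))
        = ε * (A * z T + ∫ r in (0:ℝ)..T, B r * z r) := by
      have h4 : ∫ r in (0:ℝ)..T, B r * (ε * z r) = ε * ∫ r in (0:ℝ)..T, B r * z r := by
        rw [← intervalIntegral.integral_const_mul]
        exact intervalIntegral.integral_congr fun r _ => by ring
      rw [h4]
      ring
    rw [hlin] at h3
    have hsup : supNorm T (fun s => ε * z s) ≤ |ε| * M :=
      supNorm_le hT.le fun s hs => by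
        rw [abs_mul]
        exact mul_le_mul_of_nonneg_left (le_supNorm hz hs) (abs_nonneg ε)
    have h5 : |g (fun u => Rn T n (fun s => c s + ε * z s) u) - g (fun u => Rn T n c u)
        - ε * (A * z T + ∫ r in (0:ℝ)..T, B r * z r)|
        ≤ ε'' * ((1 + ν * T) * (|ε| * M)) := by
      refine le_trans h3 ?_
      exact mul_le_mul_of_nonneg_left (mul_le_mul_of_nonneg_left hsup hC.le) hε''.le
    have hkey : ε'' * ((1 + ν * T) * (M + 1) * 2) = ε' := by
      rw [hε''def]
      exact div_mul_cancel₀ _ (by positivity)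
    have h6 : ε'' * ((1 + ν * T) * (|ε| * M)) < ε' * |ε| := by
      rw [← hkey]
      nlinarith [mul_pos hε'' hC, mul_pos (mul_pos hε'' hC) hεpos]
    rw [abs_div]
    rw [div_lt_iff₀ hεpos]
    exact lt_of_le_of_lt h5 h6
  · constructor
    · exact integrableOn_B hν μp μn
    · intro ε hε
      obtain ⟨δ, hδpos, hE⟩ := E (ε / (1 + ν * T)) (by positivity)
      refine ⟨δ, hδpos, ?_⟩
      intro z hz hzb
      have h1 := hE z hz hzb
      calc |g (fun u => Rn T n (fun s => c s + z s) u) - g (fun u => Rn T n c u)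
            - (A * z T + ∫ s in (0:ℝ)..T, B s * z s)|
          ≤ (ε / (1 + ν * T)) * ((1 + ν * T) * supNorm T z) := h1
        _ = ε * supNorm T z := by
            field_simp
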